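/- Let ≻_NE be a Nash equilibrium strategy profile of an accomplice manipulation game with strategic pairs P ⊆ M × W, and let μ be the DA matching on ≻_NE. Then no pair in P blocks μ with respect to the true preferences; equivalently, μ is ((M × W) \ P)-stable, i.e., every blocking pair of μ (with respect to the true preferences) lies outside P. -/

import Mathlib

open Classical

/-- A strict preference list over `Fin n`, encoded as a permutation whose inverse
gives the rank of each alternative (lower rank = more preferred). -/
abbrev Pref (n : ℕ) := Equiv.Perm (Fin n)

/-- A profile of preference lists, one for each of the `n` agents on one side. -/
abbrev Profile (n : ℕ) := Fin n → Pref n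

/-- `a` is strictly preferred to `b` under the list `p`. -/
def SPref {n : ℕ} (p : Pref n) (a b : Fin n) : Prop := p.symm a < p.symm b

/-- `a` is weakly preferred to `b` under the list `p`. -/
def WPref {n : ℕ} (p : Pref n) (a b : Fin n) : Prop := p.symm a ≤ p.symm b

/-- A matching: a bijection from men to women. -/
abbrev Matching (n : ℕ) := Fin n ≃ Fin n

/-- `(m, w)` is a blocking pair of `μ` w.r.t. men's profile `mp` and women's profile `wp`. -/
def Blocks {n : ℕ} (mp wp : Profile n) (μ : Matching n) (m w : Fin n) : Prop :=
  SPref (mp m) w (μ m) ∧ SPref (wp w) m (μ.symm w)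

/-- A matching is stable if it admits no blocking pair. -/
def IsStable {n : ℕ} (mp wp : Profile n) (μ : Matching n) : Prop :=
  ∀ m w, ¬ Blocks mp wp μ m w

instance {n : ℕ} : Nonempty (Matching n) := ⟨Equiv.refl _⟩

/-- The outcome of the men-proposing Deferred Acceptance algorithm, specified as
the (unique) man-optimal stable matching of the instance `⟨mp, wp⟩`. -/
noncomputable def DA {n : ℕ} (mp wp : Profile n) : Matching n :=
  Classical.epsilon fun μ => IsStable mp wp μ ∧
    ∀ μ' : Matching n, IsStable mp wp μ' → ∀ m, WPref (mp m) (μ m) (μ' m)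

/-- An accomplice manipulation at strategy profile `p` (men's reports; women truthful
with profile `wp`) by the pair `(m, w)`, via misreport `q` of man `m`: woman `w`
strictly benefits and man `m` is not worse off, w.r.t. the true profiles `mp`, `wp`. -/
def AccManip {n : ℕ} (mp wp : Profile n) (p : Profile n) (m w : Fin n) (q : Pref n) : Prop :=
  SPref (wp w) ((DA (Function.update p m q) wp).symm w) ((DA p wp).symm w) ∧
  WPref (mp m) (DA (Function.update p m q) wp m) (DA p wp m)

/-- `p` is a Nash equilibrium of the accomplice manipulation game with strategic pairs `P`. -/
def IsNE {n : ℕ} (mp wp : Profile n) (P : Set (Fin n × Fin n)) (p : Profile n) : Prop :=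
  ∀ m w, (m, w) ∈ P → ¬ ∃ q, AccManip mp wp p m w q

/-- `q` results from the list `cur` by a push-up of the set `X` above `star`
(= the current DA partner): the set of women ranked above `star` in `q` is exactly
the set of those ranked above `star` in `cur` together with `X`. -/
def IsPushUp {n : ℕ} (cur : Pref n) (star : Fin n) (X : Set (Fin n)) (q : Pref n) : Prop :=
  ∀ w, SPref q w star ↔ (SPref cur w star ∨ w ∈ X)

/-- One step of the push-up dynamic: some strategic pair `(m, w) ∈ P` performs a
no-regret push-up accomplice manipulation at profile `p`, yielding `p'`. -/
def PushUpStep {n : ℕ} (mp wp : Profile n) (P : Set (Fin n × Fin n))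
    (p p' : Profile n) : Prop :=
  ∃ m w, (m, w) ∈ P ∧ ∃ X q,
    X ⊆ {w' | SPref (p m) (DA p wp m) w'} ∧
    IsPushUp (p m) (DA p wp m) X q ∧
    p' = Function.update p m q ∧
    SPref (wp w) ((DA p' wp).symm w) ((DA p wp).symm w) ∧
    WPref (mp m) (DA p' wp m) (DA p wp m)

/-- A push-up dynamic: starts at the truthful profile, and at each step performs a
no-regret push-up accomplice manipulation by some strategic pair if one exists,
otherwise stays put. -/
def IsPushUpDynamic {n : ℕ} (mp wp : Profile n) (P : Set (Fin n × Fin n))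
    (p : ℕ → Profile n) : Prop :=
  p 0 = mp ∧ ∀ t,
    PushUpStep mp wp P (p t) (p (t + 1)) ∨
    (p (t + 1) = p t ∧ ¬ ∃ p', PushUpStep mp wp P (p t) p')

/-- A one-for-many manipulation at profile `p` by man `m` for beneficiary set `B`,
via misreport `q`: every woman in `B` weakly benefits, some woman in `B` strictly
benefits, and `m` is not worse off (true preferences). -/
def OFMManip {n : ℕ} (mp wp : Profile n) (p : Profile n) (m : Fin n)
    (B : Set (Fin n)) (q : Pref n) : Prop :=
  (∀ w ∈ B, WPref (wp w) ((DA (Function.update p m q) wp).symm w) ((DA p wp).symm w)) ∧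
  (∃ w ∈ B, SPref (wp w) ((DA (Function.update p m q) wp).symm w) ((DA p wp).symm w)) ∧
  WPref (mp m) (DA (Function.update p m q) wp m) (DA p wp m)

/-- Nash equilibrium of the one-for-many manipulation game with strategic men `Pm`
and beneficiary sets `B`. -/
def IsNEOFM {n : ℕ} (mp wp : Profile n) (Pm : Set (Fin n)) (B : Fin n → Set (Fin n))
    (p : Profile n) : Prop :=
  ∀ m ∈ Pm, ¬ ∃ q, OFMManip mp wp p m (B m) q

/-- `q` is obtained from `cur` by promoting (weakly moving up) exactly one man `a`,
leaving the relative order of all other men unchanged. -/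
def Inconspicuous {n : ℕ} (cur q : Pref n) : Prop :=
  ∃ a, (∀ x y, x ≠ a → y ≠ a → (SPref q x y ↔ SPref cur x y)) ∧
    (∀ x, SPref cur a x → SPref q a x)

/-- One step of the inconspicuous dynamic for the woman self-manipulation game:
some strategic woman `w ∈ Pw` performs an optimal inconspicuous self-manipulation
in the current instance `⟨mp, pw⟩`. -/
def InconspicuousStep {n : ℕ} (mp : Profile n) (Pw : Set (Fin n))
    (pw pw' : Profile n) : Prop :=
  ∃ w ∈ Pw, ∃ q,
    pw' = Function.update pw w q ∧
    Inconspicuous (pw w) q ∧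
    SPref (pw w) ((DA mp pw').symm w) ((DA mp pw).symm w) ∧
    ∀ q', WPref (pw w) ((DA mp pw').symm w) ((DA mp (Function.update pw w q')).symm w)

/-- The inconspicuous dynamic of the woman self-manipulation game: starts at the
truthful profile `wp`, and at each step performs an optimal inconspicuous
self-manipulation by some strategic woman if one exists, otherwise stays put. -/
def IsInconspicuousDynamic {n : ℕ} (mp wp : Profile n) (Pw : Set (Fin n))
    (pw : ℕ → Profile n) : Prop :=
  pw 0 = wp ∧ ∀ t,
    InconspicuousStep mp Pw (pw t) (pw (t + 1)) ∨
    (pw (t + 1) = pw t ∧ ¬ ∃ pw', InconspicuousStep mp Pw (pw t) pw')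

namespace AccProof

open Function

variable {n : ℕ}

/-! ### Order kit -/

lemma wpref_refl (p : Pref n) (a : Fin n) : WPref p a a := le_refl _

lemma spref_irrefl (p : Pref n) (a : Fin n) : ¬ SPref p a a := lt_irrefl _

lemma _root_.SPref.wpref {p : Pref n} {a b : Fin n} (h : SPref p a b) : WPref p a b := le_of_lt h

lemma _root_.SPref.trans {p : Pref n} {a b c : Fin n} (h1 : SPref p a b) (h2 : SPref p b c) :
    SPref p a c := lt_trans h1 h2

lemma _root_.WPref.trans_spref {p : Pref n} {a b c : Fin n} (h1 : WPref p a b) (h2 : SPref p b c) :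
    SPref p a c := lt_of_le_of_lt h1 h2

lemma _root_.SPref.trans_wpref {p : Pref n} {a b c : Fin n} (h1 : SPref p a b) (h2 : WPref p b c) :
    SPref p a c := lt_of_lt_of_le h1 h2

lemma _root_.WPref.trans {p : Pref n} {a b c : Fin n} (h1 : WPref p a b) (h2 : WPref p b c) :
    WPref p a c := le_trans h1 h2

lemma not_spref_iff {p : Pref n} {a b : Fin n} : ¬ SPref p a b ↔ WPref p b a := not_lt

lemma _root_.SPref.ne {p : Pref n} {a b : Fin n} (h : SPref p a b) : a ≠ b := by
  rintro rfl; exact lt_irrefl _ h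

lemma spref_of_ne {p : Pref n} {a b : Fin n} (hw : WPref p a b) (hne : a ≠ b) : SPref p a b :=
  lt_of_le_of_ne hw (fun h => hne (p.symm.injective h))

lemma wpref_antisymm {p : Pref n} {a b : Fin n} (h1 : WPref p a b) (h2 : WPref p b a) :
    a = b := p.symm.injective (le_antisymm h1 h2)

lemma spref_total {p : Pref n} {a b : Fin n} (hne : a ≠ b) : SPref p a b ∨ SPref p b a := by
  rcases lt_or_ge (p.symm a) (p.symm b) with h | h
  · exact Or.inl h
  · exact Or.inr (spref_of_ne h (Ne.symm hne))

lemma _root_.SPref.asymm {p : Pref n} {a b : Fin n} (h : SPref p a b) : ¬ SPref p b a :=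
  fun h' => lt_irrefl _ (lt_trans h h')

/-! ### Gale–Shapley state and step -/

structure GSState (n : ℕ) where
  hold : Fin n → Option (Fin n)
  next : Fin n → ℕ

def isFree (s : GSState n) (x : Fin n) : Prop := ∀ y, s.hold y ≠ some x

noncomputable def freeSet (s : GSState n) : Finset (Fin n) := by
  classical
  exact Finset.univ.filter (fun x => isFree s x)

lemma mem_freeSet {s : GSState n} {x : Fin n} : x ∈ freeSet s ↔ isFree s x := by
  classical
  simp [freeSet]

variable (L wp : Profile n)

noncomputable def step (s : GSState n) : GSState n :=
  if hne : (freeSet s).Nonempty then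
    if h : s.next ((freeSet s).min' hne) < n then
      match s.hold (L ((freeSet s).min' hne) ⟨s.next ((freeSet s).min' hne), h⟩) with
      | none =>
          ⟨Function.update s.hold (L ((freeSet s).min' hne)
              ⟨s.next ((freeSet s).min' hne), h⟩) (some ((freeSet s).min' hne)), s.next⟩
      | some z =>
          if SPref (wp (L ((freeSet s).min' hne) ⟨s.next ((freeSet s).min' hne), h⟩))
              ((freeSet s).min' hne) z then
            ⟨Function.update s.hold (L ((freeSet s).min' hne)
                ⟨s.next ((freeSet s).min' hne), h⟩) (some ((freeSet s).min' hne)),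
             Function.update s.next z (s.next z + 1)⟩
          else
            ⟨s.hold, Function.update s.next ((freeSet s).min' hne)
                (s.next ((freeSet s).min' hne) + 1)⟩
    else s
  else s

/-- Characterisation of one step of the algorithm. -/
inductive SSpec (s s' : GSState n) : Prop where
  | noFree : ¬ (freeSet s).Nonempty → s' = s → SSpec s s'
  | over (x : Fin n) : x ∈ freeSet s → ¬ s.next x < n → s' = s → SSpec s s'
  | acceptNone (x : Fin n) (hx : x ∈ freeSet s) (h : s.next x < n) :
      s.hold (L x ⟨s.next x, h⟩) = none →
      s' = ⟨Function.update s.hold (L x ⟨s.next x, h⟩) (some x), s.next⟩ → SSpec s s'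
  | acceptBump (x z : Fin n) (hx : x ∈ freeSet s) (h : s.next x < n) :
      s.hold (L x ⟨s.next x, h⟩) = some z → SPref (wp (L x ⟨s.next x, h⟩)) x z →
      s' = ⟨Function.update s.hold (L x ⟨s.next x, h⟩) (some x),
            Function.update s.next z (s.next z + 1)⟩ → SSpec s s'
  | reject (x z : Fin n) (hx : x ∈ freeSet s) (h : s.next x < n) :
      s.hold (L x ⟨s.next x, h⟩) = some z → ¬ SPref (wp (L x ⟨s.next x, h⟩)) x z →
      s' = ⟨s.hold, Function.update s.next x (s.next x + 1)⟩ → SSpec s s'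

lemma step_sspec (s : GSState n) : SSpec L wp s (step L wp s) := by
  unfold step
  by_cases hne : (freeSet s).Nonempty
  · simp only [dif_pos hne]
    set x := (freeSet s).min' hne with hxdef
    have hx : x ∈ freeSet s := (freeSet s).min'_mem hne
    by_cases h : s.next x < n
    · simp only [dif_pos h]
      rcases hh : s.hold (L x ⟨s.next x, h⟩) with _ | z
      · exact SSpec.acceptNone x hx h hh rfl
      · by_cases hp : SPref (wp (L x ⟨s.next x, h⟩)) x z
        · simp only [if_pos hp]
          exact SSpec.acceptBump x z hx h hh hp rfl
        · simp only [if_neg hp]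
          exact SSpec.reject x z hx h hh hp rfl
    · simp only [dif_neg h]
      exact SSpec.over x hx h rfl
  · simp only [dif_neg hne]
    exact SSpec.noFree hne rfl

end AccProof
namespace AccProof

open Function

variable {n : ℕ} (L wp : Profile n)

/-- The main invariant of the algorithm. -/
structure Inv (s : GSState n) : Prop where
  point : ∀ y z, s.hold y = some z → ∃ h : s.next z < n, y = L z ⟨s.next z, h⟩
  rejected : ∀ x (j : ℕ) (hj : j < n), j < s.next x →
      ∃ z, s.hold (L x ⟨j, hj⟩) = some z ∧ SPref (wp (L x ⟨j, hj⟩)) z x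

variable {L wp}

lemma Inv.hold_inj {s : GSState n} (hs : Inv L wp s) {y y' z : Fin n}
    (h1 : s.hold y = some z) (h2 : s.hold y' = some z) : y = y' := by
  obtain ⟨p1, e1⟩ := hs.point y z h1
  obtain ⟨p2, e2⟩ := hs.point y' z h2
  rw [e1, e2]

lemma Inv.free_next_lt {s : GSState n} (hs : Inv L wp s) {x : Fin n}
    (hx : isFree s x) : s.next x < n := by
  by_contra hlt
  push_neg at hlt
  -- every woman holds somebody
  have hall : ∀ y : Fin n, ∃ z, s.hold y = some z := by
    intro y
    obtain ⟨j, hj⟩ := (L x).surjective y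
    have hjn : (j : ℕ) < n := j.isLt
    obtain ⟨z, hz, _⟩ := hs.rejected x j hjn (lt_of_lt_of_le hjn hlt)
    refine ⟨z, ?_⟩
    have : (⟨(j : ℕ), hjn⟩ : Fin n) = j := rfl
    rw [← hj, ← this]; exact hz
  classical
  -- map each woman to her holder; injective
  choose g hg using hall
  have hginj : Function.Injective g := by
    intro y y' h
    exact hs.hold_inj (hg y) ((h ▸ hg y'))
  have hgsurj : Function.Surjective g := Finite.surjective_of_injective hginj
  obtain ⟨y, hy⟩ := hgsurj x
  exact hx y (hy ▸ hg y)

lemma inv_init : Inv L wp (⟨fun _ => none, fun _ => 0⟩ : GSState n) := by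
  constructor
  · intro y z h; simp at h
  · intro x j hj h; simp at h

lemma Inv.step {s s' : GSState n} (hs : Inv L wp s) (hss : SSpec L wp s s') : Inv L wp s' := by
  classical
  rcases hss with ⟨_, rfl⟩ | ⟨x, hx, hlt, rfl⟩ | ⟨x, hx, h, hnone, rfl⟩ |
    ⟨x, z, hx, h, hz, hp, rfl⟩ | ⟨x, z, hx, h, hz, hp, rfl⟩
  · exact hs
  · exact hs
  · -- acceptNone
    set y := L x ⟨s.next x, h⟩ with hy
    constructor
    · intro y' z' hz'
      dsimp only at hz' ⊢
      by_cases hyy : y' = y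
      · subst hyy
        rw [Function.update_self] at hz'
        cases hz'
        exact ⟨h, rfl⟩
      · rw [Function.update_of_ne hyy] at hz'
        exact hs.point y' z' hz'
    · intro x' j hj hjx
      dsimp only at hjx ⊢
      obtain ⟨z', hz', hsp⟩ := hs.rejected x' j hj hjx
      by_cases hyy : L x' ⟨j, hj⟩ = y
      · rw [hyy, hnone] at hz'; cases hz'
      · refine ⟨z', ?_, hsp⟩
        simpa [Function.update_of_ne hyy] using hz'
  · -- acceptBump
    set y := L x ⟨s.next x, h⟩ with hy
    have hfx : isFree s x := mem_freeSet.mp hx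
    constructor
    · intro y' z' hz'
      dsimp only at hz' ⊢
      by_cases hyy : y' = y
      · subst hyy
        rw [Function.update_self] at hz'
        obtain rfl : x = z' := by injection hz'
        have hzx : x ≠ z := SPref.ne hp
        rw [Function.update_of_ne hzx]
        exact ⟨h, rfl⟩
      · rw [Function.update_of_ne hyy] at hz'
        have hz'z : z' ≠ z := by
          intro he; subst he
          exact hyy (hs.hold_inj hz' hz)
        rw [Function.update_of_ne hz'z]
        exact hs.point y' z' hz'
    · intro x' j hj hjx
      dsimp only at hjx ⊢
      by_cases hx'z : x' = z
      · subst hx'z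
        rw [Function.update_self] at hjx
        -- j < next z + 1
        rcases Nat.lt_succ_iff_lt_or_eq.mp hjx with hlt' | heq
        · obtain ⟨z', hz', hsp⟩ := hs.rejected x' j hj hlt'
          by_cases hyy : L x' ⟨j, hj⟩ = y
          · rw [hyy, hz] at hz'
            cases hz'
            refine ⟨x, ?_, ?_⟩
            · rw [hyy, Function.update_self]
            · rw [hyy]; exact hp
          · refine ⟨z', ?_, hsp⟩
            rw [Function.update_of_ne hyy]; exact hz'
        · -- j = next z : the woman is y itself (z was engaged to her)
          obtain ⟨hzlt, hzy⟩ := hs.point y x' hz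
          have hyeq : L x' ⟨j, hj⟩ = y := by
            subst heq; rw [hzy]
          refine ⟨x, ?_, ?_⟩
          · rw [hyeq, Function.update_self]
          · rw [hyeq]; exact hp
      · rw [Function.update_of_ne hx'z] at hjx
        obtain ⟨z', hz', hsp⟩ := hs.rejected x' j hj hjx
        by_cases hyy : L x' ⟨j, hj⟩ = y
        · rw [hyy, hz] at hz'
          cases hz'
          refine ⟨x, ?_, ?_⟩
          · rw [hyy, Function.update_self]
          · rw [hyy]
            rw [hyy] at hsp
            exact hp.trans hsp
        · refine ⟨z', ?_, hsp⟩
          rw [Function.update_of_ne hyy]; exact hz'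
  · -- reject
    have hfx : isFree s x := mem_freeSet.mp hx
    constructor
    · intro y' z' hz'
      dsimp only at hz' ⊢
      have hz'x : z' ≠ x := by
        intro he; subst he; exact hfx y' hz'
      obtain ⟨hlt', he⟩ := hs.point y' z' hz'
      rw [Function.update_of_ne hz'x]
      exact ⟨hlt', he⟩
    · intro x' j hj hjx
      dsimp only at hjx ⊢
      by_cases hx'x : x' = x
      · subst hx'x
        rw [Function.update_self] at hjx
        rcases Nat.lt_succ_iff_lt_or_eq.mp hjx with hlt' | heq
        · exact hs.rejected x' j hj hlt'
        · subst heq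
          refine ⟨z, hz, ?_⟩
          have hzx : z ≠ x' := by
            intro he; subst he; exact hfx _ hz
          rcases spref_total (p := wp (L x' ⟨s.next x', hj⟩)) hzx with hh | hh
          · exact hh
          · exact absurd hh hp
      · rw [Function.update_of_ne hx'x] at hjx
        exact hs.rejected x' j hj hjx

end AccProof
namespace AccProof

open Function

variable {n : ℕ} (L wp : Profile n)

noncomputable def run (t : ℕ) : GSState n := (step L wp)^[t] ⟨fun _ => none, fun _ => 0⟩

lemma run_succ (t : ℕ) : run L wp (t + 1) = step L wp (run L wp t) := by
  unfold run
  rw [Function.iterate_succ_apply']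

lemma run_zero : run L wp 0 = (⟨fun _ => none, fun _ => 0⟩ : GSState n) := rfl

lemma inv_run (t : ℕ) : Inv L wp (run L wp t) := by
  induction t with
  | zero => exact inv_init
  | succ t ih => rw [run_succ]; exact ih.step (step_sspec L wp _)

variable {L wp}

/-- `next` is monotone along a step, and changes by at most one, for one man. -/
lemma SSpec.next_mono {s s' : GSState n} (hss : SSpec L wp s s') (x : Fin n) :
    s'.next x = s.next x ∨ s'.next x = s.next x + 1 := by
  classical
  rcases hss with ⟨_, rfl⟩ | ⟨x', _, _, rfl⟩ | ⟨x', hx', h, hnone, rfl⟩ |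
    ⟨x', z, hx', h, hz, hp, rfl⟩ | ⟨x', z, hx', h, hz, hp, rfl⟩ <;> try dsimp only
  · exact Or.inl rfl
  · exact Or.inl rfl
  · exact Or.inl rfl
  · by_cases hxz : x = z
    · subst hxz; rw [Function.update_self]; exact Or.inr rfl
    · rw [Function.update_of_ne hxz]; exact Or.inl rfl
  · by_cases hxx : x = x'
    · subst hxx; rw [Function.update_self]; exact Or.inr rfl
    · rw [Function.update_of_ne hxx]; exact Or.inl rfl

lemma next_le_next {t t' : ℕ} (h : t ≤ t') (x : Fin n) :
    (run L wp t).next x ≤ (run L wp t').next x := by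
  induction t', h using Nat.le_induction with
  | base => exact le_refl _
  | succ t' ht' ih =>
      rw [run_succ]
      rcases (step_sspec L wp (run L wp t')).next_mono x with h' | h' <;> omega

/-- Holders weakly improve. -/
lemma SSpec.hold_mono {s s' : GSState n} (hss : SSpec L wp s s') {y z : Fin n}
    (h : s.hold y = some z) :
    ∃ z', s'.hold y = some z' ∧ WPref (wp y) z' z ∧ (z' ≠ z → SPref (wp y) z' z) := by
  classical
  rcases hss with ⟨_, rfl⟩ | ⟨x', _, _, rfl⟩ | ⟨x', hx', hlt, hnone, rfl⟩ |
    ⟨x', z2, hx', hlt, hz2, hp, rfl⟩ | ⟨x', z2, hx', hlt, hz2, hp, rfl⟩ <;> try dsimp only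
  · exact ⟨z, h, wpref_refl _ _, fun hne => absurd rfl hne⟩
  · exact ⟨z, h, wpref_refl _ _, fun hne => absurd rfl hne⟩
  · by_cases hyy : y = L x' ⟨s.next x', hlt⟩
    · rw [← hyy] at hnone; rw [hnone] at h; cases h
    · rw [Function.update_of_ne hyy]
      exact ⟨z, h, wpref_refl _ _, fun hne => absurd rfl hne⟩
  · by_cases hyy : y = L x' ⟨s.next x', hlt⟩
    · subst hyy
      rw [hz2] at h
      obtain rfl : z2 = z := by injection h
      rw [Function.update_self]
      exact ⟨x', rfl, hp.wpref, fun _ => hp⟩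
    · rw [Function.update_of_ne hyy]
      exact ⟨z, h, wpref_refl _ _, fun hne => absurd rfl hne⟩
  · exact ⟨z, h, wpref_refl _ _, fun hne => absurd rfl hne⟩

/-- Holders weakly improve over time. -/
lemma hold_mono_run {t t' : ℕ} (h : t ≤ t') {y z : Fin n}
    (hz : (run L wp t).hold y = some z) :
    ∃ z', (run L wp t').hold y = some z' ∧ WPref (wp y) z' z := by
  induction t', h using Nat.le_induction with
  | base => exact ⟨z, hz, wpref_refl _ _⟩
  | succ t' ht' ih =>
      obtain ⟨z', hz', hw⟩ := ih
      rw [run_succ]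
      obtain ⟨z'', hz'', hw', _⟩ := (step_sspec L wp (run L wp t')).hold_mono hz'
      exact ⟨z'', hz'', hw'.trans hw⟩

/-- Once a woman is held by the man she holds at some later time, she keeps him in between:
precisely, if she holds `z` at `t` and holds `z` again at `t'' ≥ t`, then at every
`t ≤ t' ≤ t''` she holds `z`. Simplified version: if she holds `z` at `t` and at `t''`,
with `t ≤ t' ≤ t''` then she holds `z` at `t'`. -/
lemma hold_between {t t' t'' : ℕ} (h1 : t ≤ t') (h2 : t' ≤ t'') {y z : Fin n}
    (hz : (run L wp t).hold y = some z) (hz'' : (run L wp t'').hold y = some z) :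
    (run L wp t').hold y = some z := by
  obtain ⟨z', hz', hw⟩ := hold_mono_run h1 hz
  obtain ⟨z'', hz''2, hw'⟩ := hold_mono_run h2 hz'
  rw [hz''] at hz''2
  obtain rfl : z = z'' := by injection hz''2
  have : z' = z := wpref_antisymm hw (hw')
  rw [this] at hz'
  exact hz'

end AccProof
namespace AccProof

open Function Finset

variable {n : ℕ} (L wp : Profile n)

/-- Termination measure. -/
noncomputable def phi (s : GSState n) : ℕ :=
  2 * (∑ x : Fin n, (n - s.next x)) + (freeSet s).card

variable {L wp}

lemma sum_update_next (f : Fin n → ℕ) (z : Fin n) (hz : f z < n) :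
    (∑ x : Fin n, (n - Function.update f z (f z + 1) x)) + 1 = ∑ x : Fin n, (n - f x) := by
  classical
  have h1 : (fun x => n - Function.update f z (f z + 1) x)
      = Function.update (fun x => n - f x) z (n - (f z + 1)) := by
    funext x
    by_cases hx : x = z
    · subst hx; rw [Function.update_self, Function.update_self]
    · rw [Function.update_of_ne hx, Function.update_of_ne hx]
  rw [h1, Finset.sum_update_of_mem (Finset.mem_univ z),
    ← Finset.add_sum_erase _ _ (Finset.mem_univ z), Finset.erase_eq]
  omega

lemma phi_dec {s : GSState n} (hs : Inv L wp s) (hne : (freeSet s).Nonempty) :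
    phi (step L wp s) < phi s := by
  classical
  rcases step_sspec L wp s with ⟨hn, he⟩ | ⟨x, hx, hlt, he⟩ | ⟨x, hx, h, hnone, he⟩ |
    ⟨x, z, hx, h, hz, hp, he⟩ | ⟨x, z, hx, h, hz, hp, he⟩
  · exact absurd hne hn
  · exact absurd (hs.free_next_lt (mem_freeSet.mp hx)) hlt
  · -- acceptNone : a free man becomes engaged
    rw [he]
    unfold phi
    dsimp only
    have hsub : freeSet (⟨Function.update s.hold (L x ⟨s.next x, h⟩) (some x), s.next⟩ :
        GSState n) ⊆ (freeSet s).erase x := by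
      intro x' hx'
      have hf' := mem_freeSet.mp hx'
      rw [Finset.mem_erase]
      constructor
      · intro hxx
        rw [hxx] at hf'
        exact hf' (L x ⟨s.next x, h⟩) (by dsimp only; rw [Function.update_self])
      · rw [mem_freeSet]
        intro y hy
        by_cases hyy : y = L x ⟨s.next x, h⟩
        · subst hyy; rw [hnone] at hy; cases hy
        · exact hf' y (by dsimp only; rw [Function.update_of_ne hyy]; exact hy)
    have hcard : (freeSet (⟨Function.update s.hold (L x ⟨s.next x, h⟩) (some x), s.next⟩ :
        GSState n)).card < (freeSet s).card := by
      calc _ ≤ ((freeSet s).erase x).card := Finset.card_le_card hsub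
      _ < (freeSet s).card := Finset.card_erase_lt_of_mem hx
    omega
  · -- acceptBump
    rw [he]
    unfold phi
    dsimp only
    have hzlt : s.next z < n := (hs.point _ _ hz).1
    have hsum := sum_update_next s.next z hzlt
    have hsub : freeSet (⟨Function.update s.hold (L x ⟨s.next x, h⟩) (some x),
        Function.update s.next z (s.next z + 1)⟩ : GSState n) ⊆ insert z (freeSet s) := by
      intro x' hx'
      have hf' := mem_freeSet.mp hx'
      rw [Finset.mem_insert]
      by_cases hxz : x' = z
      · exact Or.inl hxz
      · refine Or.inr (mem_freeSet.mpr ?_)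
        intro y hy
        by_cases hyy : y = L x ⟨s.next x, h⟩
        · subst hyy
          rw [hz] at hy
          obtain rfl : z = x' := by injection hy
          exact hxz rfl
        · exact hf' y (by dsimp only; rw [Function.update_of_ne hyy]; exact hy)
    have hcard : (freeSet (⟨Function.update s.hold (L x ⟨s.next x, h⟩) (some x),
        Function.update s.next z (s.next z + 1)⟩ : GSState n)).card
        ≤ (freeSet s).card + 1 := by
      calc _ ≤ (insert z (freeSet s)).card := Finset.card_le_card hsub
      _ ≤ (freeSet s).card + 1 := Finset.card_insert_le _ _
    omega
  · -- reject
    rw [he]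
    unfold phi
    dsimp only
    have hsum := sum_update_next s.next x h
    have hfeq : freeSet (⟨s.hold, Function.update s.next x (s.next x + 1)⟩ : GSState n)
        = freeSet s := by
      ext x'
      simp only [mem_freeSet]
      constructor <;> intro hf y <;> exact hf y
    rw [hfeq]
    omega

lemma exists_empty_free : ∃ T, freeSet (run L wp T) = ∅ := by
  by_contra hc
  push_neg at hc
  have hdec : ∀ t, phi (run L wp (t + 1)) < phi (run L wp t) := by
    intro t
    rw [run_succ]
    exact phi_dec (inv_run L wp t) (hc t)
  have hbound : ∀ t, phi (run L wp t) + t ≤ phi (run L wp 0) := by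
    intro t
    induction t with
    | zero => omega
    | succ t ih => have := hdec t; omega
  have := hbound (phi (run L wp 0) + 1)
  omega

variable (L wp)

noncomputable def Tfin : ℕ := Nat.find (exists_empty_free (L := L) (wp := wp))

lemma free_Tfin : freeSet (run L wp (Tfin L wp)) = ∅ :=
  Nat.find_spec (exists_empty_free (L := L) (wp := wp))

variable {L wp}

lemma step_of_empty {s : GSState n} (h : freeSet s = ∅) : step L wp s = s := by
  unfold step
  rw [dif_neg (by rw [h]; exact fun hh => Finset.not_nonempty_empty hh)]

lemma run_eq_of_ge {t : ℕ} (h : Tfin L wp ≤ t) : run L wp t = run L wp (Tfin L wp) := by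
  induction t, h using Nat.le_induction with
  | base => rfl
  | succ t ht ih => rw [run_succ, ih, step_of_empty (free_Tfin L wp)]

variable (L wp)

noncomputable def sfin : GSState n := run L wp (Tfin L wp)

lemma engaged_fin : ∀ x : Fin n, ∃ y, (sfin L wp).hold y = some x := by
  intro x
  have hx : x ∉ freeSet (sfin L wp) := by
    rw [show freeSet (sfin L wp) = ∅ from free_Tfin L wp]
    exact Finset.notMem_empty x
  rw [mem_freeSet] at hx
  unfold isFree at hx
  push_neg at hx
  exact hx

lemma inv_fin : Inv L wp (sfin L wp) := inv_run L wp _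

lemma nextlt_fin : ∀ x : Fin n, (sfin L wp).next x < n := by
  intro x
  obtain ⟨y, hy⟩ := engaged_fin L wp x
  exact ((inv_fin L wp).point y x hy).1

noncomputable def GSfun : Fin n → Fin n :=
  fun x => L x ⟨(sfin L wp).next x, nextlt_fin L wp x⟩

lemma hold_GSfun (x : Fin n) : (sfin L wp).hold (GSfun L wp x) = some x := by
  obtain ⟨y, hy⟩ := engaged_fin L wp x
  obtain ⟨hlt, he⟩ := (inv_fin L wp).point y x hy
  rw [← hy]
  congr 1
  rw [he]
  rfl

lemma GSfun_bij : Function.Bijective (GSfun L wp) := by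
  rw [Finite.injective_iff_bijective.symm]
  intro x x' h
  have h1 := hold_GSfun L wp x
  have h2 := hold_GSfun L wp x'
  rw [h] at h1
  rw [h1] at h2
  injection h2

noncomputable def GSmatch : Matching n := Equiv.ofBijective _ (GSfun_bij L wp)

lemma GSmatch_apply (x : Fin n) : GSmatch L wp x = GSfun L wp x := rfl

lemma GSmatch_rank (x : Fin n) :
    ((L x).symm (GSmatch L wp x) : Fin n) = ⟨(sfin L wp).next x, nextlt_fin L wp x⟩ := by
  rw [GSmatch_apply]
  unfold GSfun
  rw [Equiv.symm_apply_apply]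

lemma hold_GSmatch_symm (y : Fin n) :
    (sfin L wp).hold y = some ((GSmatch L wp).symm y) := by
  have := hold_GSfun L wp ((GSmatch L wp).symm y)
  rwa [show GSfun L wp ((GSmatch L wp).symm y) = y from (GSmatch L wp).apply_symm_apply y] at this

lemma GSmatch_stable : IsStable L wp (GSmatch L wp) := by
  rintro x y ⟨h1, h2⟩
  -- h1 : SPref (L x) y (GSmatch x)
  have hrank : ((L x).symm y : ℕ) < (sfin L wp).next x := by
    have := h1
    unfold SPref at this
    rw [GSmatch_rank] at this
    exact this
  have hj : ((L x).symm y : ℕ) < n := ((L x).symm y).isLt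
  obtain ⟨z, hz, hsp⟩ := (inv_fin L wp).rejected x ((L x).symm y) hj hrank
  have hyy : L x ⟨((L x).symm y : ℕ), hj⟩ = y := by
    have : (⟨((L x).symm y : ℕ), hj⟩ : Fin n) = (L x).symm y := rfl
    rw [this, Equiv.apply_symm_apply]
  rw [hyy] at hz hsp
  have hzz : z = (GSmatch L wp).symm y := by
    rw [hold_GSmatch_symm L wp y] at hz
    exact (Option.some.inj hz).symm
  subst hzz
  exact hsp.asymm h2

variable {L wp} in
lemma stable_not_rejected {ρ : Matching n} (hρ : IsStable L wp ρ) :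
    ∀ t x, (run L wp t).next x ≤ ((L x).symm (ρ x) : ℕ) := by
  intro t
  induction t with
  | zero => intro x; exact Nat.zero_le _
  | succ t ih =>
      intro x
      rw [run_succ]
      set s := run L wp t with hs
      have hinv : Inv L wp s := inv_run L wp t
      rcases step_sspec L wp s with ⟨hn, he⟩ | ⟨x', hx', hlt, he⟩ | ⟨x', hx', h, hnone, he⟩ |
        ⟨x', z, hx', h, hz, hp, he⟩ | ⟨x', z, hx', h, hz, hp, he⟩ <;> rw [he] <;> try dsimp only
      · exact ih x
      · exact ih x
      · exact ih x
      · -- bump of z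
        by_cases hxz : x = z
        · subst hxz
          rw [Function.update_self]
          -- suppose next z = rank (ρ z): then L z ⟨next z⟩ = ρ z is the blocked woman
          by_contra hcon
          push_neg at hcon
          have heq : s.next x = ((L x).symm (ρ x) : ℕ) := le_antisymm (ih x) (by omega)
          -- the woman z is engaged to:
          obtain ⟨hzlt, hzy⟩ := hinv.point _ _ hz
          have hyρ : L x' ⟨s.next x', h⟩ = ρ x := by
            rw [hzy]
            have : (⟨s.next x, hzlt⟩ : Fin n) = (L x).symm (ρ x) := by
              apply Fin.ext; exact heq
            rw [this, Equiv.apply_symm_apply]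
          -- blocking pair (x', ρ x)
          refine hρ x' (ρ x) ⟨?_, ?_⟩
          · -- x' prefers ρ x over ρ x'
            have hne : ρ x ≠ ρ x' := by
              intro hcon2
              have : x = x' := ρ.injective hcon2
              subst this
              exact (mem_freeSet.mp hx') _ hz
            have hle : ((L x').symm (L x' ⟨s.next x', h⟩) : ℕ) ≤ ((L x').symm (ρ x') : ℕ) := by
              rw [Equiv.symm_apply_apply]
              exact ih x'
            rw [hyρ] at hle
            unfold SPref
            rw [Fin.lt_iff_val_lt_val]
            rcases Nat.lt_or_ge ((L x').symm (ρ x) : ℕ) ((L x').symm (ρ x') : ℕ) with hh | hh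
            · exact hh
            · exfalso
              have : ((L x').symm (ρ x) : ℕ) = ((L x').symm (ρ x') : ℕ) := le_antisymm hle hh
              exact hne (by
                have := Fin.ext this
                exact (L x').symm.injective this)
          · -- ρ x prefers x' over x = ρ.symm (ρ x)
            rw [Equiv.symm_apply_apply]
            rw [hyρ] at hp
            exact hp
        · rw [Function.update_of_ne hxz]
          exact ih x
      · -- reject of x'
        by_cases hxx : x = x'
        · subst hxx
          rw [Function.update_self]
          by_contra hcon
          push_neg at hcon
          have heq : s.next x = ((L x).symm (ρ x) : ℕ) := le_antisymm (ih x) (by omega)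
          have hyρ : L x ⟨s.next x, h⟩ = ρ x := by
            have : (⟨s.next x, h⟩ : Fin n) = (L x).symm (ρ x) := by
              apply Fin.ext; exact heq
            rw [this, Equiv.apply_symm_apply]
          -- holder z blocks with woman ρ x
          obtain ⟨hzlt, hzy⟩ := hinv.point _ _ hz
          have hzx : z ≠ x := by
            intro hcon2; subst hcon2; exact (mem_freeSet.mp hx') _ hz
          have hsp : SPref (wp (L x ⟨s.next x, h⟩)) z x := by
            rcases spref_total (p := wp (L x ⟨s.next x, h⟩)) hzx with hh | hh
            · exact hh
            · exact absurd hh hp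
          refine hρ z (ρ x) ⟨?_, ?_⟩
          · have hne : ρ x ≠ ρ z := fun hcon2 => hzx (ρ.injective hcon2).symm
            have hle : ((L z).symm (L x ⟨s.next x, h⟩) : ℕ) ≤ ((L z).symm (ρ z) : ℕ) := by
              rw [hzy, Equiv.symm_apply_apply]
              exact ih z
            rw [hyρ] at hle
            unfold SPref
            rw [Fin.lt_iff_val_lt_val]
            rcases Nat.lt_or_ge ((L z).symm (ρ x) : ℕ) ((L z).symm (ρ z) : ℕ) with hh | hh
            · exact hh
            · exfalso
              have : ((L z).symm (ρ x) : ℕ) = ((L z).symm (ρ z) : ℕ) := le_antisymm hle hh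
              exact hne (by
                have := Fin.ext this
                exact (L z).symm.injective this)
          · rw [Equiv.symm_apply_apply]
            rw [hyρ] at hsp
            exact hsp
        · rw [Function.update_of_ne hxx]
          exact ih x

lemma GSmatch_opt {ρ : Matching n} (hρ : IsStable L wp ρ) (x : Fin n) :
    WPref (L x) (GSmatch L wp x) (ρ x) := by
  unfold WPref
  rw [GSmatch_rank]
  exact stable_not_rejected hρ (Tfin L wp) x


lemma GSmatch_spec : IsStable L wp (GSmatch L wp) ∧
    ∀ μ' : Matching n, IsStable L wp μ' → ∀ m, WPref (L m) (GSmatch L wp m) (μ' m) :=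
  ⟨GSmatch_stable L wp, fun μ' hμ' m => GSmatch_opt L wp hμ' m⟩

lemma DA_spec : IsStable L wp (DA L wp) ∧
    ∀ μ' : Matching n, IsStable L wp μ' → ∀ m, WPref (L m) (DA L wp m) (μ' m) :=
  Classical.epsilon_spec (p := fun μ : Matching n => IsStable L wp μ ∧
    ∀ μ' : Matching n, IsStable L wp μ' → ∀ m, WPref (L m) (μ m) (μ' m))
    ⟨GSmatch L wp, GSmatch_spec L wp⟩

lemma DA_eq_GSmatch : DA L wp = GSmatch L wp := by
  apply Equiv.ext
  intro x
  exact wpref_antisymm ((DA_spec L wp).2 _ (GSmatch_stable L wp) x)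
    ((GSmatch_spec L wp).2 _ (DA_spec L wp).1 x)

end AccProof
namespace AccProof

open Function Finset

variable {n : ℕ} {L wp : Profile n}

/-- If a man's pointer advances at a step, he was rejected by the woman at his current
position: afterwards she holds somebody strictly better, and before the step she held
either him (bump) or already that better man (immediate reject). -/
lemma increment_analysis {t : ℕ} {u : Fin n}
    (hinc : (run L wp (t+1)).next u = (run L wp t).next u + 1) :
    ∃ h : (run L wp t).next u < n,
      ∃ z', (run L wp (t+1)).hold (L u ⟨(run L wp t).next u, h⟩) = some z' ∧
        SPref (wp (L u ⟨(run L wp t).next u, h⟩)) z' u ∧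
        ((run L wp t).hold (L u ⟨(run L wp t).next u, h⟩) = some u ∨
         (run L wp t).hold (L u ⟨(run L wp t).next u, h⟩) = some z') := by
  classical
  set s := run L wp t with hs
  have hinv : Inv L wp s := inv_run L wp t
  have hrs : run L wp (t+1) = step L wp s := run_succ L wp t
  rcases step_sspec L wp s with ⟨hn, he⟩ | ⟨x', hx', hlt, he⟩ | ⟨x', hx', h, hnone, he⟩ |
    ⟨x', z, hx', h, hz, hp, he⟩ | ⟨x', z, hx', h, hz, hp, he⟩ <;>
      rw [hrs] at hinc ⊢ <;> rw [he] at hinc ⊢ <;> try dsimp only at hinc ⊢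
  · omega
  · omega
  · omega
  · -- acceptBump of z
    by_cases huz : u = z
    · subst huz
      obtain ⟨hul, huy⟩ := hinv.point _ _ hz
      have hyy : L x' ⟨s.next x', h⟩ = L u ⟨s.next u, hul⟩ := huy
      refine ⟨hul, x', ?_, ?_, ?_⟩
      · rw [← hyy, Function.update_self]
      · rw [← hyy]; exact hp
      · left; rw [← hyy]; exact hz
    · rw [Function.update_of_ne huz] at hinc; omega
  · -- reject of x'
    by_cases hux : u = x'
    · subst hux
      refine ⟨h, z, hz, ?_, Or.inr hz⟩
      have hzu : z ≠ u := by
        intro hh; subst hh; exact (mem_freeSet.mp hx') _ hz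
      rcases spref_total (p := wp (L u ⟨s.next u, h⟩)) hzu with hh | hh
      · exact hh
      · exact absurd hh hp
    · rw [Function.update_of_ne hux] at hinc; omega

/-- Crossing lemma: the pointer takes every intermediate value. -/
lemma exists_crossing {x : Fin n} {j : ℕ} (hij : j < (sfin L wp).next x) :
    ∃ t, (run L wp t).next x = j ∧ (run L wp (t+1)).next x = j + 1 := by
  classical
  have hex : ∃ t, j < (run L wp t).next x := ⟨Tfin L wp, hij⟩
  set t2 := Nat.find hex with ht2
  have hspec : j < (run L wp t2).next x := Nat.find_spec hex
  have ht2pos : t2 ≠ 0 := by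
    intro h0
    rw [h0] at hspec
    simp [run_zero] at hspec
  obtain ⟨t1, he1⟩ : ∃ t1, t2 = t1 + 1 := ⟨t2 - 1, by omega⟩
  rw [he1] at hspec
  have hfind : ∀ t', t' < t2 → ¬ j < (run L wp t').next x := fun t' h => Nat.find_min hex h
  have hnot : ¬ j < (run L wp t1).next x := hfind t1 (by omega)
  push_neg at hnot
  have hmono := (step_sspec L wp (run L wp t1)).next_mono x
  rw [← run_succ] at hmono
  refine ⟨t1, ?_, ?_⟩ <;> omega

/-- A change of holder is a bump: the new man is strictly better and the old one's
pointer advances past this woman. -/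
lemma hold_change {t : ℕ} {y u v : Fin n}
    (hu : (run L wp t).hold y = some u) (hv : (run L wp (t+1)).hold y = some v)
    (hne : v ≠ u) :
    SPref (wp y) v u ∧
    (run L wp (t+1)).next u = (run L wp t).next u + 1 ∧
    (∃ h : (run L wp t).next u < n, y = L u ⟨(run L wp t).next u, h⟩) ∧
    (∀ y', y' ≠ y → (run L wp (t+1)).hold y' = (run L wp t).hold y') := by
  classical
  set s := run L wp t with hs
  have hinv : Inv L wp s := inv_run L wp t
  have hrs : run L wp (t+1) = step L wp s := run_succ L wp t
  rcases step_sspec L wp s with ⟨hn, he⟩ | ⟨x', hx', hlt, he⟩ | ⟨x', hx', h, hnone, he⟩ |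
    ⟨x', z, hx', h, hz, hp, he⟩ | ⟨x', z, hx', h, hz, hp, he⟩ <;>
      rw [hrs] at hv ⊢ <;> rw [he] at hv ⊢ <;> try dsimp only at hv ⊢
  · rw [hu] at hv; exact absurd (Option.some.inj hv) hne.symm
  · rw [hu] at hv; exact absurd (Option.some.inj hv) hne.symm
  · -- acceptNone
    by_cases hyy : y = L x' ⟨s.next x', h⟩
    · rw [← hyy] at hnone; rw [hnone] at hu; cases hu
    · rw [Function.update_of_ne hyy] at hv
      rw [hu] at hv; exact absurd (Option.some.inj hv) hne.symm
  · -- acceptBump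
    by_cases hyy : y = L x' ⟨s.next x', h⟩
    · subst hyy
      rw [hz] at hu
      obtain rfl : z = u := by injection hu
      rw [Function.update_self] at hv
      obtain rfl : x' = v := by injection hv
      obtain ⟨hul, huy⟩ := hinv.point _ _ hz
      refine ⟨hp, ?_, ⟨hul, huy⟩, ?_⟩
      · rw [Function.update_self]
      · intro y' hy'
        rw [Function.update_of_ne hy']
    · rw [Function.update_of_ne hyy] at hv
      rw [hu] at hv; exact absurd (Option.some.inj hv) hne.symm
  · -- reject
    rw [hu] at hv; exact absurd (Option.some.inj hv) hne.symm

end AccProof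
namespace AccProof

open Function Finset

variable {n : ℕ} {L wp : Profile n}

lemma exists_hold_time (x : Fin n) :
    ∃ t, (run L wp t).hold (GSmatch L wp x) = some x :=
  ⟨Tfin L wp, hold_GSfun L wp x⟩

noncomputable def sig (L wp : Profile n) (x : Fin n) : ℕ :=
  Nat.find (exists_hold_time (L := L) (wp := wp) x)

lemma sig_spec (x : Fin n) :
    (run L wp (sig L wp x)).hold (GSmatch L wp x) = some x :=
  Nat.find_spec (exists_hold_time (L := L) (wp := wp) x)

lemma sig_min {x : Fin n} {t : ℕ} (h : (run L wp t).hold (GSmatch L wp x) = some x) :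
    sig L wp x ≤ t :=
  Nat.find_le h

lemma sig_le_Tfin (x : Fin n) : sig L wp x ≤ Tfin L wp :=
  sig_min (hold_GSfun L wp x)

lemma sig_persist {x : Fin n} {t : ℕ} (h : sig L wp x ≤ t) :
    (run L wp t).hold (GSmatch L wp x) = some x := by
  rcases le_or_gt t (Tfin L wp) with hle | hgt
  · exact hold_between h hle (sig_spec x) (hold_GSfun L wp x)
  · rw [run_eq_of_ge (le_of_lt hgt)]
    exact hold_GSfun L wp x

/-- The central execution lemma: if every blocking pair of `μ` (w.r.t. the instance
`(L, wp)`) is `(m, w)`, and every man weakly prefers `μ` to the Gale–Shapley matching,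
then `μ m` coincides with the GS partner of `m`. -/
lemma key_lemma (μ : Matching n) (m w : Fin n)
    (K1 : ∀ x y, Blocks L wp μ x y → x = m ∧ y = w)
    (K2 : ∀ x, WPref (L x) (μ x) (GSmatch L wp x)) :
    μ m = GSmatch L wp m := by
  classical
  by_contra K4
  set ν := GSmatch L wp with hν
  set D : Finset (Fin n) := Finset.univ.filter (fun x => μ x ≠ ν x) with hD
  have hmD : m ∈ D := by simp [hD]; exact K4
  have hDs : ∀ x ∈ D, SPref (L x) (μ x) (ν x) := by
    intro x hx
    simp only [hD, Finset.mem_filter] at hx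
    exact spref_of_ne (K2 x) hx.2
  -- maximizer of sig over D
  obtain ⟨xs, hxsD, hxsmax⟩ := Finset.exists_max_image D (sig L wp) ⟨m, hmD⟩
  set t2 := sig L wp xs with ht2
  set ys := ν xs with hys
  -- the μ-partner of ys
  set xmu := μ.symm ys with hxmu
  have hμxmu : μ xmu = ys := μ.apply_symm_apply ys
  have hxmuD : xmu ∈ D := by
    simp only [hD, Finset.mem_filter]
    refine ⟨Finset.mem_univ _, ?_⟩
    intro hcon
    rw [hcon] at hμxmu
    have : xmu = xs := ν.injective hμxmu
    rw [this] at hcon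
    have := hDs xs hxsD
    rw [hcon] at this
    exact spref_irrefl _ _ this
  have hxmune : xmu ≠ xs := by
    intro hcon
    have hμxs : μ xs = ν xs := by rw [← hcon, hμxmu, hys, hcon]
    have := hDs xs hxsD
    rw [hμxs] at this
    exact spref_irrefl _ _ this
  -- rank of ys in xmu's list, and the crossing time
  have hrank : ((L xmu).symm ys : ℕ) < (sfin L wp).next xmu := by
    have hsp : SPref (L xmu) ys (ν xmu) := by
      have := hDs xmu hxmuD
      rwa [hμxmu] at this
    unfold SPref at hsp
    rw [GSmatch_rank] at hsp
    exact hsp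
  obtain ⟨t1, ht1a, ht1b⟩ := exists_crossing hrank
  have hinc : (run L wp (t1+1)).next xmu = (run L wp t1).next xmu + 1 := by omega
  obtain ⟨hlt1, z', hz'hold, hz'sp, hz'old⟩ := increment_analysis hinc
  have hywoman : L xmu ⟨(run L wp t1).next xmu, hlt1⟩ = ys := by
    have : (⟨(run L wp t1).next xmu, hlt1⟩ : Fin n) = (L xmu).symm ys := by
      apply Fin.ext
      simp [ht1a]
    rw [this, Equiv.apply_symm_apply]
  rw [hywoman] at hz'hold hz'sp hz'old
  -- sig xmu > t1
  have hsigxmu : t1 < sig L wp xmu := by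
    by_contra hcon
    push_neg at hcon
    have hh := sig_persist (x := xmu) hcon
    obtain ⟨hl, he⟩ := (inv_run L wp t1).point _ _ hh
    have : ν xmu = ys := by
      rw [he, ← hywoman]
    have h2 : xmu = xs := ν.injective this
    exact hxmune h2
  have ht1t2 : t1 < t2 := lt_of_lt_of_le hsigxmu (hxsmax xmu hxmuD)
  -- decompose t2 = t3 + 1
  obtain ⟨t3, ht3⟩ : ∃ t3, t2 = t3 + 1 := ⟨t2 - 1, by omega⟩
  have hholdt2 : (run L wp t2).hold ys = some xs := sig_spec xs
  -- the holder u of ys at time t3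
  have hub : ∃ u, (run L wp t3).hold ys = some u ∧
      (SPref (wp ys) u xmu ∨ u = xmu) := by
    rcases lt_or_eq_of_le (show t1 + 1 ≤ t3 + 1 by omega) with hlt | heq
    · -- t1 + 1 ≤ t3
      obtain ⟨u, hu, hw⟩ := hold_mono_run (show t1 + 1 ≤ t3 by omega) hz'hold
      exact ⟨u, hu, Or.inl (hw.trans_spref hz'sp)⟩
    · -- t3 = t1
      obtain rfl : t3 = t1 := by omega
      rcases hz'old with h | h
      · exact ⟨xmu, h, Or.inr rfl⟩
      · exact ⟨z', h, Or.inl hz'sp⟩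
  obtain ⟨u, hu, husp⟩ := hub
  have huxs : u ≠ xs := by
    intro hcon
    rw [hcon] at hu
    have := sig_min (x := xs) hu
    omega
  -- the step t3 → t2 is a bump of u by xs at ys
  have hvt2 : (run L wp (t3+1)).hold ys = some xs := by rw [← ht3]; exact hholdt2
  obtain ⟨hspxsu, hincu, ⟨hlu, hyu⟩, hrest⟩ := hold_change hu hvt2 huxs.symm
  -- u is not in D : sig u > t2
  have hsigu : t2 < sig L wp u := by
    have h1 : ¬ sig L wp u ≤ t3 := by
      intro hcon
      have hh := sig_persist (x := u) hcon
      have := (inv_run L wp t3).hold_inj hh hu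
      -- ν u = ys
      have h2 : u = xs := ν.injective this
      exact huxs h2
    have h2 : ¬ sig L wp u = t2 := by
      intro hcon
      have hh : (run L wp t2).hold (ν u) = some u := by
        rw [← hcon]; exact sig_spec u
      have hnu : ν u ≠ ys := by
        intro hcon2
        exact huxs (ν.injective hcon2)
      rw [ht3] at hh
      rw [hrest _ hnu] at hh
      have := sig_min (x := u) hh
      omega
    omega
  have huD : u ∉ D := by
    intro hcon
    have := hxsmax u hcon
    omega
  have hum : u ≠ m := fun hcon => huD (hcon ▸ hmD)
  have huxmu : u ≠ xmu := fun hcon => huD (hcon ▸ hxmuD)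
  have husp' : SPref (wp ys) u xmu := by
    rcases husp with h | h
    · exact h
    · exact absurd h huxmu
  -- u's μ-partner equals his ν-partner
  have hμu : μ u = ν u := by
    have := huD
    simp only [hD, Finset.mem_filter, not_and, Finset.mem_univ, true_implies] at this
    push_neg at this
    exact this
  -- (u, ys) blocks μ
  have hblocks : Blocks L wp μ u ys := by
    constructor
    · -- SPref (L u) ys (μ u)
      rw [hμu]
      unfold SPref
      rw [GSmatch_rank]
      have hr1 : ((L u).symm ys : ℕ) = (run L wp t3).next u := by
        rw [hyu, Equiv.symm_apply_apply]
      have hr2 : (run L wp (t3+1)).next u ≤ (sfin L wp).next u := by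
        have : t3 + 1 ≤ Tfin L wp := by
          have := sig_le_Tfin (L := L) (wp := wp) xs
          omega
        exact next_le_next this u
      rw [Fin.lt_iff_val_lt_val]
      rw [hr1]
      simp only []
      omega
    · -- SPref (wp ys) u (μ.symm ys)
      rw [← hxmu]
      exact husp'
  obtain ⟨h1, h2⟩ := K1 u ys hblocks
  exact hum h1

end AccProof
namespace AccProof

open Function

variable {n : ℕ}

def topFun (rw : Fin n) : Fin n → Fin n := fun r =>
  if h : (r : ℕ) < (rw : ℕ) then ⟨(r : ℕ) + 1, by have := rw.isLt; omega⟩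
  else if (r : ℕ) = (rw : ℕ) then ⟨0, by have := rw.isLt; omega⟩ else r

lemma topFun_val (rw r : Fin n) : (topFun rw r : ℕ) =
    if (r : ℕ) < (rw : ℕ) then (r : ℕ) + 1 else if (r : ℕ) = (rw : ℕ) then 0 else r := by
  unfold topFun
  split_ifs <;> rfl

lemma topFun_inj (rw : Fin n) : Function.Injective (topFun rw) := by
  intro a b h
  have hv : (topFun rw a : ℕ) = (topFun rw b : ℕ) := congrArg Fin.val h
  rw [topFun_val, topFun_val] at hv
  have ha := a.isLt
  have hb := b.isLt
  have hr := rw.isLt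
  apply Fin.ext
  split_ifs at hv <;> omega

noncomputable def topEquiv (rw : Fin n) : Equiv.Perm (Fin n) :=
  Equiv.ofBijective _ (Finite.injective_iff_bijective.mp (topFun_inj rw))

lemma topEquiv_apply (rw r : Fin n) : topEquiv rw r = topFun rw r := rfl

/-- The list obtained from `pm` by moving `w` to the top. -/
noncomputable def moveTop (pm : Pref n) (w : Fin n) : Pref n :=
  (pm.symm.trans (topEquiv (pm.symm w))).symm

lemma moveTop_symm (pm : Pref n) (w a : Fin n) :
    (moveTop pm w).symm a = topFun (pm.symm w) (pm.symm a) := by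
  unfold moveTop
  rw [Equiv.symm_symm]
  rfl

lemma moveTop_symm_w (pm : Pref n) (w : Fin n) : ((moveTop pm w).symm w : ℕ) = 0 := by
  rw [moveTop_symm, topFun_val]
  simp

lemma moveTop_top {pm : Pref n} {w x : Fin n} (h : x ≠ w) : SPref (moveTop pm w) w x := by
  unfold SPref
  rw [Fin.lt_iff_val_lt_val, moveTop_symm_w]
  have hne : ((moveTop pm w).symm x : ℕ) ≠ 0 := by
    intro hcon
    apply h
    apply (moveTop pm w).symm.injective
    apply Fin.ext
    rw [hcon, moveTop_symm_w]
  omega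

lemma moveTop_pres {pm : Pref n} {w a b : Fin n} (ha : a ≠ w) (hb : b ≠ w) :
    SPref (moveTop pm w) a b ↔ SPref pm a b := by
  unfold SPref
  rw [Fin.lt_iff_val_lt_val, Fin.lt_iff_val_lt_val, moveTop_symm, moveTop_symm,
    topFun_val, topFun_val]
  have hra' : (pm.symm a : ℕ) ≠ (pm.symm w : ℕ) := by
    intro h
    exact ha (pm.symm.injective (Fin.ext h))
  have hrb' : (pm.symm b : ℕ) ≠ (pm.symm w : ℕ) := by
    intro h
    exact hb (pm.symm.injective (Fin.ext h))
  have h1 := (pm.symm a).isLt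
  have h2 := (pm.symm b).isLt
  split_ifs <;> omega

end AccProof
theorem ne_blocking_pairs_outside_P {n : ℕ} (mp wp : Profile n)
    (P : Set (Fin n × Fin n)) (p : Profile n) (hNE : IsNE mp wp P p) :
    ∀ m w, Blocks mp wp (DA p wp) m w → (m, w) ∉ P := by
  classical
  intro m w hb hP
  obtain ⟨hb1, hb2⟩ := hb
  set q := AccProof.moveTop (p m) w with hq
  set p' := Function.update p m q with hp'
  have hp'm : p' m = q := Function.update_self m q p
  have hp'x : ∀ x, x ≠ m → p' x = p x := fun x hx => Function.update_of_ne hx q p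
  have hμspec := AccProof.DA_spec p wp
  have hνspec := AccProof.DA_spec p' wp
  set μ := DA p wp with hμ
  set ν := DA p' wp with hν
  have hμm_ne_w : μ m ≠ w := by
    intro h; rw [h] at hb1; exact AccProof.spref_irrefl _ _ hb1
  apply hNE m w hP
  have hmain : SPref (wp w) (ν.symm w) (μ.symm w) ∧ WPref (mp m) (ν m) (μ m) := by
    by_cases hc : ν m = w
    · have hsymm : ν.symm w = m := by rw [← hc, Equiv.symm_apply_apply]
      exact ⟨by rw [hsymm]; exact hb2, by rw [hc]; exact hb1.wpref⟩
    · -- ν m ≠ w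
      have h1 : SPref (p' m) w (ν m) := by
        rw [hp'm]; exact AccProof.moveTop_top hc
      have h2 : ¬ SPref (wp w) m (ν.symm w) := fun hcon => hνspec.1 m w ⟨h1, hcon⟩
      have ham : ν.symm w ≠ m := by
        intro h
        apply hc
        rw [← h, Equiv.apply_symm_apply]
      have haw : SPref (wp w) (ν.symm w) m :=
        AccProof.spref_of_ne (AccProof.not_spref_iff.mp h2) ham
      -- ν is stable w.r.t. the original profile p
      have hνp : IsStable p wp ν := by
        intro x y hbl
        obtain ⟨hb1', hb2'⟩ := hbl
        by_cases hxm : x = m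
        · rw [hxm] at hb1' hb2'
          by_cases hyw : y = w
          · subst hyw; exact haw.asymm hb2'
          · refine hνspec.1 m y ⟨?_, hb2'⟩
            rw [hp'm]
            exact (AccProof.moveTop_pres hyw hc).mpr hb1'
        · refine hνspec.1 x y ⟨?_, hb2'⟩
          rw [hp'x x hxm]
          exact hb1'
      have hw1 : WPref (p m) (μ m) (ν m) := hμspec.2 ν hνp m
      have hGS : AccProof.GSmatch p' wp = ν := (AccProof.DA_eq_GSmatch p' wp).symm
      have heq : μ m = ν m := by
        rw [← hGS]
        apply AccProof.key_lemma μ m w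
        · intro x y hbl
          obtain ⟨hb1', hb2'⟩ := hbl
          by_cases hxm : x = m
          · refine ⟨hxm, ?_⟩
            rw [hxm] at hb1' hb2'
            by_cases hyw : y = w
            · exact hyw
            · exfalso
              rw [hp'm] at hb1'
              exact hμspec.1 m y ⟨(AccProof.moveTop_pres hyw hμm_ne_w).mp hb1', hb2'⟩
          · exfalso
            rw [hp'x x hxm] at hb1'
            exact hμspec.1 x y ⟨hb1', hb2'⟩
        · intro x
          rw [hGS]
          by_cases hxm : x = m
          · rw [hxm, hp'm]
            by_cases hmm : μ m = ν m
            · rw [hmm]; exact AccProof.wpref_refl _ _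
            · exact ((AccProof.moveTop_pres hμm_ne_w hc).mpr
                (AccProof.spref_of_ne hw1 hmm)).wpref
          · rw [hp'x x hxm]
            exact hμspec.2 ν hνp x
      refine ⟨haw.trans hb2, ?_⟩
      rw [heq]
      exact AccProof.wpref_refl _ _
  exact ⟨q, hmain.1, hmain.2⟩
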